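/- Let G = (V,E) be a diamond-free finite simple graph (containing no induced subgraph isomorphic to the diamond, i.e., K4 minus one edge). Then there exists an optimal STC-labeling L = (S,W) of G such that the spanning subgraph (V,S) is a cluster graph, i.e., every connected component of (V,S) is a clique. -/

import Mathlib

/-- An STC-labeling of a simple graph `G`, given by its set `S` of strong edges
(the weak edges are `G.edgeSet \ S`). -/
def IsSTCLabeling {V : Type*} (G : SimpleGraph V) (S : Set (Sym2 V)) : Prop :=
  S ⊆ G.edgeSet ∧ ∀ u v w : V, s(u, v) ∈ S → s(v, w) ∈ S → u ≠ w → G.Adj u w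

/-- The diamond graph: `K₄` minus one edge. -/
def diamondGraph : SimpleGraph (Fin 4) :=
  (⊤ : SimpleGraph (Fin 4)).deleteEdges {s(0, 1)}

lemma diamond_embed {V : Type*} (G : SimpleGraph V) {a b c d : V}
    (hab : G.Adj a b) (hac : G.Adj a c) (hbc : G.Adj b c) (hbd : G.Adj b d)
    (hcd : G.Adj c d) (had : ¬ G.Adj a d) (hne : a ≠ d) :
    Nonempty (diamondGraph ↪g G) := by
  refine ⟨⟨⟨![a, d, b, c], ?_⟩, ?_⟩⟩
  · intro i j h
    fin_cases i <;> fin_cases j <;> simp_all [hab.ne, hac.ne, hbc.ne, hbd.ne, hcd.ne,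
      hab.ne', hac.ne', hbc.ne', hbd.ne', hcd.ne', hne, hne.symm]
  · have had' : ¬ G.Adj d a := fun h => had h.symm
    intro i j
    show G.Adj (![a, d, b, c] i) (![a, d, b, c] j) ↔ diamondGraph.Adj i j
    fin_cases i <;> fin_cases j <;>
      simp [diamondGraph, SimpleGraph.deleteEdges_adj, Sym2.eq_iff, hab, hac, hbc, hbd, hcd,
        hab.symm, hac.symm, hbc.symm, hbd.symm, hcd.symm, had, had', G.irrefl]

lemma stc_aux {V : Type*} (G : SimpleGraph V) (hfree : IsEmpty (diamondGraph ↪g G))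
    {S : Set (Sym2 V)} (hS : IsSTCLabeling G S) {u v w : V}
    (huv : s(u, v) ∈ S) (hvw : s(v, w) ∈ S) (huw : G.Adj u w) :
    ∀ c : V, s(w, c) ∈ S → c ≠ u → G.Adj u c := by
  intro c hwc hcu
  by_cases hcv : c = v
  · subst hcv; exact G.mem_edgeSet.mp (hS.1 huv)
  · have hcw : s(c, w) ∈ S := by rwa [Sym2.eq_swap]
    have hwv : s(w, v) ∈ S := by rwa [Sym2.eq_swap]
    have hcvAdj : G.Adj c v := hS.2 c w v hcw hwv hcv
    by_contra huc
    exact hfree.false (diamond_embed G (G.mem_edgeSet.mp (hS.1 huv)) huw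
      (G.mem_edgeSet.mp (hS.1 hvw)) hcvAdj.symm (G.mem_edgeSet.mp (hS.1 hwc)) huc
      hcu.symm).some

/-- In a diamond-free graph there is an optimal STC-labeling whose strong edges form
a cluster graph (every connected component of the spanning subgraph of strong edges
is a clique, i.e. the strong adjacency is transitive). -/
theorem diamond_free_optimal_cluster_labeling {V : Type*} [Fintype V]
    (G : SimpleGraph V) (hfree : IsEmpty (diamondGraph ↪g G)) :
    ∃ S : Set (Sym2 V), IsSTCLabeling G S ∧
      (∀ S' : Set (Sym2 V), IsSTCLabeling G S' → S'.ncard ≤ S.ncard) ∧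
      (∀ u v w : V, s(u, v) ∈ S → s(v, w) ∈ S → u ≠ w → s(u, w) ∈ S) := by
  set T : Set ℕ := {n | ∃ S : Set (Sym2 V), IsSTCLabeling G S ∧ S.ncard = n} with hT
  have hne : T.Nonempty := ⟨0, ∅, ⟨Set.empty_subset _, by simp⟩, by simp⟩
  have hbdd : BddAbove T := by
    refine ⟨(Set.univ : Set (Sym2 V)).ncard, ?_⟩
    rintro n ⟨S, hS, rfl⟩
    exact Set.ncard_le_ncard (Set.subset_univ S) Set.finite_univ
  obtain ⟨S, hS, hcard⟩ := Nat.sSup_mem hne hbdd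
  have hopt : ∀ S' : Set (Sym2 V), IsSTCLabeling G S' → S'.ncard ≤ S.ncard := by
    intro S' hS'
    rw [hcard]
    exact le_csSup hbdd ⟨S', hS', rfl⟩
  refine ⟨S, hS, hopt, ?_⟩
  intro u v w huv hvw huw
  by_contra hnew
  have hAuw : G.Adj u w := hS.2 u v w huv hvw huw
  have hwv : s(w, v) ∈ S := by rwa [Sym2.eq_swap]
  have hvu : s(v, u) ∈ S := by rwa [Sym2.eq_swap]
  have key1 : ∀ c : V, s(w, c) ∈ S → c ≠ u → G.Adj u c :=
    stc_aux G hfree hS huv hvw hAuw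
  have key2 : ∀ c : V, s(u, c) ∈ S → c ≠ w → G.Adj w c :=
    stc_aux G hfree hS hwv hvu hAuw.symm
  have hSTC' : IsSTCLabeling G (insert s(u, w) S) := by
    constructor
    · exact Set.insert_subset (G.mem_edgeSet.mpr hAuw) hS.1
    · intro a b c hab hbc hac
      rcases Set.mem_insert_iff.mp hab with h1 | h1 <;>
        rcases Set.mem_insert_iff.mp hbc with h2 | h2
      · rw [Sym2.eq_iff] at h1 h2
        rcases h1 with ⟨rfl, rfl⟩ | ⟨rfl, rfl⟩ <;>
          rcases h2 with ⟨e1, e2⟩ | ⟨e1, e2⟩ <;> first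
          | exact absurd e1 huw | exact absurd e1 huw.symm
          | exact absurd (e2.symm.trans e1) huw
          | (subst e2; exact absurd rfl hac)
      · rw [Sym2.eq_iff] at h1
        rcases h1 with ⟨rfl, rfl⟩ | ⟨rfl, rfl⟩
        · exact key1 c h2 hac.symm
        · exact key2 c h2 hac.symm
      · rw [Sym2.eq_iff] at h2
        have hba : s(b, a) ∈ S := by rwa [Sym2.eq_swap]
        rcases h2 with ⟨rfl, rfl⟩ | ⟨rfl, rfl⟩
        · exact (key2 a hba hac).symm
        · exact (key1 a hba hac).symm
      · exact hS.2 a b c h1 h2 hac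
  have hfin : S.Finite := Set.toFinite S
  have : (insert s(u, w) S).ncard = S.ncard + 1 :=
    Set.ncard_insert_of_notMem hnew hfin
  have := hopt _ hSTC'
  omega
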